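/- Let B be a monoid in a braided monoidal category with comultiplication δ and counit ε making it a weak bimonoid, except that only the axioms (eq:w_bimonoid_1) (both variants), (eq:w_bimonoid_3) (both variants, i.e., axiom (w)), and (eq:w_bimonoid_5) (axiom (b)) are assumed. Then the weak counit axiom (v) holds: ε ∘ μ ∘ (μ ⊗ B) = (ε ⊗ ε) ∘ (μ ⊗ μ) ∘ (B ⊗ δ ⊗ B) = (ε ⊗ ε) ∘ (μ ⊗ μ) ∘ (B ⊗ (c⁻¹_{B,B} ∘ δ) ⊗ B) as morphisms B ⊗ B ⊗ B → K. -/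

import Mathlib

open CategoryTheory MonoidalCategory

set_option maxHeartbeats 1000000

/-- For an object `B` of a braided monoidal category with a monoid and a comonoid
structure satisfying axiom (b), the weak unit axiom (w) (both variants), and the two
identities (eq:w_bimonoid_1), the weak counit axiom (v) holds (both variants). -/
theorem weak_counit_of_weak_axioms {M : Type*} [Category M] [MonoidalCategory M]
    [BraidedCategory M] (B : M)
    (mul : B ⊗ B ⟶ B) (one : 𝟙_ M ⟶ B) (comul : B ⟶ B ⊗ B) (counit : B ⟶ 𝟙_ M)
    (mul_assoc : (mul ⊗ₘ 𝟙 B) ≫ mul = (α_ B B B).hom ≫ (𝟙 B ⊗ₘ mul) ≫ mul)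
    (one_mul : (one ⊗ₘ 𝟙 B) ≫ mul = (λ_ B).hom)
    (mul_one : (𝟙 B ⊗ₘ one) ≫ mul = (ρ_ B).hom)
    (comul_coassoc : comul ≫ (comul ⊗ₘ 𝟙 B) ≫ (α_ B B B).hom = comul ≫ (𝟙 B ⊗ₘ comul))
    (comul_counit_left : comul ≫ (counit ⊗ₘ 𝟙 B) = (λ_ B).inv)
    (comul_counit_right : comul ≫ (𝟙 B ⊗ₘ counit) = (ρ_ B).inv)
    -- axiom (b) = (eq:w_bimonoid_5)
    (compat : mul ≫ comul =
      (comul ⊗ₘ comul) ≫ (α_ B B (B ⊗ B)).hom ≫ (𝟙 B ⊗ₘ (α_ B B B).inv) ≫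
        (𝟙 B ⊗ₘ ((β_ B B).hom ⊗ₘ 𝟙 B)) ≫ (𝟙 B ⊗ₘ (α_ B B B).hom) ≫ (α_ B B (B ⊗ B)).inv ≫
        (mul ⊗ₘ mul))
    -- axiom (w), plain variant = second identity of (eq:w_bimonoid_3)
    (weak_unit : one ≫ comul ≫ (comul ⊗ₘ 𝟙 B) =
      (λ_ (𝟙_ M)).inv ≫ (one ⊗ₘ one) ≫ (comul ⊗ₘ comul) ≫ (α_ B B (B ⊗ B)).hom ≫
        (𝟙 B ⊗ₘ (α_ B B B).inv) ≫ (𝟙 B ⊗ₘ (mul ⊗ₘ 𝟙 B)) ≫ (α_ B B B).inv)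
    -- axiom (w), inverse-braiding variant = first identity of (eq:w_bimonoid_3)
    (weak_unit' : one ≫ comul ≫ (comul ⊗ₘ 𝟙 B) =
      (λ_ (𝟙_ M)).inv ≫ (one ⊗ₘ one) ≫ (comul ⊗ₘ comul) ≫ (α_ B B (B ⊗ B)).hom ≫
        (𝟙 B ⊗ₘ (α_ B B B).inv) ≫ (𝟙 B ⊗ₘ ((β_ B B).inv ⊗ₘ 𝟙 B)) ≫ (𝟙 B ⊗ₘ (mul ⊗ₘ 𝟙 B)) ≫
        (α_ B B B).inv)
    -- first identity of (eq:w_bimonoid_1)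
    (eq1a : (𝟙 B ⊗ₘ comul) ≫ (𝟙 B ⊗ₘ (β_ B B).inv) ≫ (α_ B B B).inv ≫ (mul ⊗ₘ 𝟙 B) ≫
        (counit ⊗ₘ 𝟙 B) ≫ (λ_ B).hom =
      (𝟙 B ⊗ₘ (λ_ B).inv) ≫ (𝟙 B ⊗ₘ (one ⊗ₘ 𝟙 B)) ≫ (𝟙 B ⊗ₘ (comul ⊗ₘ 𝟙 B)) ≫
        (𝟙 B ⊗ₘ ((β_ B B).inv ⊗ₘ 𝟙 B)) ≫ (𝟙 B ⊗ₘ (α_ B B B).hom) ≫ (α_ B B (B ⊗ B)).inv ≫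
        (mul ⊗ₘ mul) ≫ (counit ⊗ₘ 𝟙 B) ≫ (λ_ B).hom)
    -- second identity of (eq:w_bimonoid_1)
    (eq1b : (𝟙 B ⊗ₘ comul) ≫ (α_ B B B).inv ≫ (mul ⊗ₘ 𝟙 B) ≫
        (counit ⊗ₘ 𝟙 B) ≫ (λ_ B).hom =
      (𝟙 B ⊗ₘ (λ_ B).inv) ≫ (𝟙 B ⊗ₘ (one ⊗ₘ 𝟙 B)) ≫ (𝟙 B ⊗ₘ (comul ⊗ₘ 𝟙 B)) ≫
        (𝟙 B ⊗ₘ (α_ B B B).hom) ≫ (α_ B B (B ⊗ B)).inv ≫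
        (mul ⊗ₘ mul) ≫ (counit ⊗ₘ 𝟙 B) ≫ (λ_ B).hom) :
    -- axiom (v), both variants
    ((mul ⊗ₘ 𝟙 B) ≫ mul ≫ counit =
      (α_ B B B).hom ≫ (𝟙 B ⊗ₘ (comul ⊗ₘ 𝟙 B)) ≫ (𝟙 B ⊗ₘ (α_ B B B).hom) ≫
        (α_ B B (B ⊗ B)).inv ≫ (mul ⊗ₘ mul) ≫ (counit ⊗ₘ counit) ≫ (λ_ (𝟙_ M)).hom) ∧
    ((mul ⊗ₘ 𝟙 B) ≫ mul ≫ counit =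
      (α_ B B B).hom ≫ (𝟙 B ⊗ₘ ((comul ≫ (β_ B B).inv) ⊗ₘ 𝟙 B)) ≫ (𝟙 B ⊗ₘ (α_ B B B).hom) ≫
        (α_ B B (B ⊗ B)).inv ≫ (mul ⊗ₘ mul) ≫ (counit ⊗ₘ counit) ≫ (λ_ (𝟙_ M)).hom) := by
  have hcc : comul ≫ B ◁ counit = (ρ_ B).inv := by
    simpa [MonoidalCategory.tensorHom_def] using comul_counit_right
  have hccl : comul ≫ counit ▷ B = (λ_ B).inv := by
    simpa [MonoidalCategory.tensorHom_def] using comul_counit_left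
  have hma : mul ▷ B ≫ mul = (α_ B B B).hom ≫ B ◁ mul ≫ mul := by
    simpa [MonoidalCategory.tensorHom_def] using mul_assoc
  -- C4 (generic associativity step)
  have hC4 : ∀ g : B ⟶ B,
      (((g ⊗ₘ 𝟙 B) ≫ mul) ⊗ₘ 𝟙 B) ≫ mul ≫ counit =
        (α_ B B B).hom ≫ (𝟙 B ⊗ₘ mul) ≫ (g ⊗ₘ 𝟙 B) ≫ mul ≫ counit := by
    intro g
    simp [MonoidalCategory.tensorHom_def, whisker_exchange, whisker_exchange_assoc, hma, reassoc_of% hma]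
  -- C1 : RHS of eq1b in factored form
  have hφ : (𝟙 B ⊗ₘ (λ_ B).inv) ≫ (𝟙 B ⊗ₘ (one ⊗ₘ 𝟙 B)) ≫ (𝟙 B ⊗ₘ (comul ⊗ₘ 𝟙 B)) ≫
        (𝟙 B ⊗ₘ (α_ B B B).hom) ≫ (α_ B B (B ⊗ B)).inv ≫
        (mul ⊗ₘ mul) ≫ (counit ⊗ₘ 𝟙 B) ≫ (λ_ B).hom =
      (((ρ_ B).inv ≫ (𝟙 B ⊗ₘ one) ≫ (𝟙 B ⊗ₘ comul) ≫ (α_ B B B).inv ≫ (mul ⊗ₘ 𝟙 B) ≫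
        (counit ⊗ₘ 𝟙 B) ≫ (λ_ B).hom) ⊗ₘ 𝟙 B) ≫ mul := by
    simp [MonoidalCategory.tensorHom_def, whisker_exchange, whisker_exchange_assoc]
  -- C1' : RHS of eq1a in factored form
  have hφ' : (𝟙 B ⊗ₘ (λ_ B).inv) ≫ (𝟙 B ⊗ₘ (one ⊗ₘ 𝟙 B)) ≫ (𝟙 B ⊗ₘ (comul ⊗ₘ 𝟙 B)) ≫
        (𝟙 B ⊗ₘ ((β_ B B).inv ⊗ₘ 𝟙 B)) ≫ (𝟙 B ⊗ₘ (α_ B B B).hom) ≫ (α_ B B (B ⊗ B)).inv ≫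
        (mul ⊗ₘ mul) ≫ (counit ⊗ₘ 𝟙 B) ≫ (λ_ B).hom =
      (((ρ_ B).inv ≫ (𝟙 B ⊗ₘ one) ≫ (𝟙 B ⊗ₘ comul) ≫ (𝟙 B ⊗ₘ (β_ B B).inv) ≫
        (α_ B B B).inv ≫ (mul ⊗ₘ 𝟙 B) ≫
        (counit ⊗ₘ 𝟙 B) ≫ (λ_ B).hom) ⊗ₘ 𝟙 B) ≫ mul := by
    simp [MonoidalCategory.tensorHom_def, whisker_exchange, whisker_exchange_assoc]
  -- C3 : LHS of eq1b postcomposed with counit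
  have hC3 : (𝟙 B ⊗ₘ comul) ≫ (α_ B B B).inv ≫ (mul ⊗ₘ 𝟙 B) ≫
        (counit ⊗ₘ 𝟙 B) ≫ (λ_ B).hom ≫ counit = mul ≫ counit := by
    simp only [MonoidalCategory.tensorHom_def, MonoidalCategory.id_tensorHom, MonoidalCategory.tensorHom_id, MonoidalCategory.whiskerLeft_id,
      MonoidalCategory.id_whiskerRight, Category.id_comp, Category.comp_id, Category.assoc]
    rw [← leftUnitor_naturality, ← whisker_exchange_assoc, ← whisker_exchange_assoc,
      ← associator_inv_naturality_right_assoc, ← MonoidalCategory.whiskerLeft_comp_assoc, hcc]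
    simp [unitors_equal]
  -- C3' : LHS of eq1a postcomposed with counit
  have hC3' : (𝟙 B ⊗ₘ comul) ≫ (𝟙 B ⊗ₘ (β_ B B).inv) ≫ (α_ B B B).inv ≫ (mul ⊗ₘ 𝟙 B) ≫
        (counit ⊗ₘ 𝟙 B) ≫ (λ_ B).hom ≫ counit = mul ≫ counit := by
    simp only [MonoidalCategory.tensorHom_def, MonoidalCategory.id_tensorHom, MonoidalCategory.tensorHom_id, MonoidalCategory.whiskerLeft_id,
      MonoidalCategory.id_whiskerRight, Category.id_comp, Category.comp_id, Category.assoc]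
    rw [← leftUnitor_naturality, ← whisker_exchange_assoc, ← whisker_exchange_assoc,
      ← associator_inv_naturality_right_assoc, ← MonoidalCategory.whiskerLeft_comp_assoc,
      ← MonoidalCategory.whiskerLeft_comp_assoc]
    have hb : (β_ B B).inv ≫ B ◁ counit = counit ▷ B ≫ (β_ B (𝟙_ M)).inv := by
      rw [Iso.inv_comp_eq, ← Category.assoc, Iso.eq_comp_inv,
        BraidedCategory.braiding_naturality_right]
    rw [Category.assoc, hb, reassoc_of% hccl]
    simp [unitors_equal]
  -- C2 : first target RHS in factored form
  have hC2 : (α_ B B B).hom ≫ (𝟙 B ⊗ₘ (comul ⊗ₘ 𝟙 B)) ≫ (𝟙 B ⊗ₘ (α_ B B B).hom) ≫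
        (α_ B B (B ⊗ B)).inv ≫ (mul ⊗ₘ mul) ≫ (counit ⊗ₘ counit) ≫ (λ_ (𝟙_ M)).hom =
      (((𝟙 B ⊗ₘ comul) ≫ (α_ B B B).inv ≫ (mul ⊗ₘ 𝟙 B) ≫
        (counit ⊗ₘ 𝟙 B) ≫ (λ_ B).hom) ⊗ₘ 𝟙 B) ≫ mul ≫ counit := by
    simp [MonoidalCategory.tensorHom_def, whisker_exchange, whisker_exchange_assoc]
  -- C2' : second target RHS in factored form
  have hC2' : (α_ B B B).hom ≫ (𝟙 B ⊗ₘ ((comul ≫ (β_ B B).inv) ⊗ₘ 𝟙 B)) ≫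
        (𝟙 B ⊗ₘ (α_ B B B).hom) ≫
        (α_ B B (B ⊗ B)).inv ≫ (mul ⊗ₘ mul) ≫ (counit ⊗ₘ counit) ≫ (λ_ (𝟙_ M)).hom =
      (((𝟙 B ⊗ₘ comul) ≫ (𝟙 B ⊗ₘ (β_ B B).inv) ≫ (α_ B B B).inv ≫ (mul ⊗ₘ 𝟙 B) ≫
        (counit ⊗ₘ 𝟙 B) ≫ (λ_ B).hom) ⊗ₘ 𝟙 B) ≫ mul ≫ counit := by
    simp [MonoidalCategory.tensorHom_def, whisker_exchange, whisker_exchange_assoc]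
  constructor
  · rw [reassoc_of% mul_assoc, ← hC3, reassoc_of% eq1b, reassoc_of% hφ, ← hC4, ← hφ,
      ← eq1b, ← hC2]
  · rw [reassoc_of% mul_assoc, ← hC3', reassoc_of% eq1a, reassoc_of% hφ', ← hC4, ← hφ',
      ← eq1a, ← hC2']
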